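/- Let n ≥ 1, 1 < p ≤ 2, p' = p/(p−1), and let N > n be real. There is a constant C > 0 such that for all j, j' ∈ ℤ with j ≤ j' + 8, all k ∈ ℤ^n, and all families (u^{ε'}_{k'})_{ε'∈E_n, k'∈ℤ^n} and (v^{ε''}_{k''})_{ε''∈E_n, k''∈ℤ^n} of nonnegative real numbers: Σ_{ε'∈E_n} Σ_{k'∈ℤ^n} Σ_{ε''∈E_n} Σ_{k''∈ℤ^n} u^{ε'}_{k'} (v^{ε''}_{k''})^{p−1} (1+|2^{j−j'}k'−k|)^{−8N} (1+|k'−k''|)^{−8N} ≤ C Σ_{w∈ℤ^n} Σ_{w'∈ℤ^n} (1+|w|)^{−N} (1+|w'|)^{−N} ( Σ_{ε'∈E_n} Σ_{k' : Q_{j',k'} ⊆ Q^w_{j,k}} (u^{ε'}_{k'})^p )^{1/p} ( Σ_{ε''∈E_n} Σ_{k'' : Q_{j',k''} ⊆ Q^{w'}_{j,k}} (v^{ε''}_{k''})^p )^{1/p'}, both sides interpreted in [0,∞]. -/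

import Mathlib

noncomputable section

open MeasureTheory Real Complex
open scoped ENNReal NNReal

/-- `ℝⁿ` modeled as functions `Fin n → ℝ`. -/
abbrev Vec (n : ℕ) : Type := Fin n → ℝ

/-- Integer lattice `ℤⁿ`. -/
abbrev IVec (n : ℕ) : Type := Fin n → ℤ

/-- The index set `E_n = {0,1}ⁿ \ {0}`, with `{0,1}ⁿ` modeled as `Fin n → Bool`. -/
abbrev En (n : ℕ) : Type := {ε : Fin n → Bool // ε ≠ fun _ => false}

/-- The Euclidean norm on `Vec n`. -/
def enorm2 {n : ℕ} (x : Vec n) : ℝ := Real.sqrt (∑ i, (x i) ^ 2)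

/-- The dyadic cube `Q_{j,k} = {x : 2^j x − k ∈ [0,1)ⁿ}` of side length `2^{−j}`. -/
def dyadicCube (n : ℕ) (j : ℤ) (k : IVec n) : Set (Vec n) :=
  {x | ∀ i, (k i : ℝ) ≤ (2:ℝ) ^ j * x i ∧ (2:ℝ) ^ j * x i < (k i : ℝ) + 1}

/-- `Q^w_{j,k} = 2^{8−j} w + tilde-Q_{j,k}`, where `tilde-Q_{j,k}` is the unique dyadic
cube of side length `2^{8−j}` containing `Q_{j,k}` (its index is `⌊k/2^8⌋`). -/
def QW (n : ℕ) (j : ℤ) (k w : IVec n) : Set (Vec n) :=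
  dyadicCube n (j - 8) (fun i => Int.fdiv (k i) 256 + w i)

namespace Stmt8

variable {n : ℕ}

lemma enorm2_nonneg (x : Vec n) : 0 ≤ enorm2 x := Real.sqrt_nonneg _

lemma enorm2_eq_norm (x : Vec n) :
    enorm2 x = ‖(WithLp.equiv 2 (Fin n → ℝ)).symm x‖ := by
  rw [EuclideanSpace.norm_eq]
  unfold enorm2
  congr 1
  refine Finset.sum_congr rfl fun i _ => ?_
  show x i ^ 2 = ‖x i‖ ^ 2
  rw [Real.norm_eq_abs, _root_.sq_abs]

lemma enorm2_add_le (x y : Vec n) : enorm2 (x + y) ≤ enorm2 x + enorm2 y := by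
  rw [enorm2_eq_norm, enorm2_eq_norm, enorm2_eq_norm]
  exact norm_add_le _ _

lemma enorm2_mono {x z : Vec n} (h : ∀ i, |x i| ≤ z i) : enorm2 x ≤ enorm2 z := by
  apply Real.sqrt_le_sqrt
  refine Finset.sum_le_sum fun i _ => ?_
  calc x i ^ 2 = |x i| ^ 2 := (_root_.sq_abs _).symm
  _ ≤ z i ^ 2 := pow_le_pow_left₀ (abs_nonneg _) (h i) 2

lemma enorm2_abs (y : Vec n) : enorm2 (fun i => |y i|) = enorm2 y := by
  unfold enorm2; simp [_root_.sq_abs]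

lemma enorm2_one : enorm2 (n := n) (fun _ => 1) = Real.sqrt n := by
  unfold enorm2; simp

lemma enorm2_le_add_sqrt {x y : Vec n} (h : ∀ i, |x i| ≤ |y i| + 1) :
    enorm2 x ≤ enorm2 y + Real.sqrt n := by
  have h1 : enorm2 x ≤ enorm2 ((fun i => |y i|) + fun _ => (1:ℝ)) := by
    refine enorm2_mono fun i => ?_
    show |x i| ≤ |y i| + 1
    exact h i
  refine h1.trans ?_
  refine (enorm2_add_le _ _).trans ?_
  rw [enorm2_abs, enorm2_one]

lemma coord_le_enorm2 (x : Vec n) (i : Fin n) : |x i| ≤ enorm2 x := by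
  rw [← Real.sqrt_sq_eq_abs]
  apply Real.sqrt_le_sqrt
  exact Finset.single_le_sum (fun j _ => sq_nonneg (x j)) (Finset.mem_univ i)

lemma fdiv_le' {M : ℤ} (hM : 0 < M) (a : ℤ) :
    M * a.fdiv M ≤ a ∧ a < M * (a.fdiv M + 1) := by
  rw [Int.fdiv_eq_ediv_of_nonneg _ hM.le]
  constructor
  · rw [mul_comm]; exact Int.ediv_mul_le a hM.ne'
  · rw [mul_comm]; exact Int.lt_ediv_add_one_mul_self a hM

lemma fdiv_eq_of {M a c : ℤ} (hM : 0 < M) (h1 : c * M ≤ a) (h2 : a < (c + 1) * M) :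
    a.fdiv M = c := by
  rw [Int.fdiv_eq_ediv_of_nonneg _ hM.le]
  have hle : c ≤ a / M := (Int.le_ediv_iff_mul_le hM).mpr h1
  have hlt : a / M < c + 1 := (Int.ediv_lt_iff_lt_mul hM).mpr h2
  omega

lemma coordw {M : ℤ} (hM : 0 < M) {P : ℝ} (hP : 0 < P) (hPM : P * (M:ℝ) = 256)
    (a b : ℤ) :
    |((a.fdiv M - b.fdiv 256 : ℤ) : ℝ)| ≤ |P * (a:ℝ) - (b:ℝ)| + 1 := by
  obtain ⟨h1, h2⟩ := fdiv_le' hM a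
  obtain ⟨h3, h4⟩ := fdiv_le' (show (0:ℤ) < 256 by norm_num) b
  set d' := a.fdiv M with hd'
  set d := b.fdiv 256 with hd
  have c1 : (M:ℝ) * (d':ℝ) ≤ (a:ℝ) := by exact_mod_cast h1
  have c2 : (a:ℝ) < (M:ℝ) * ((d':ℝ) + 1) := by exact_mod_cast h2
  have c3 : (256:ℝ) * (d:ℝ) ≤ (b:ℝ) := by exact_mod_cast h3
  have c4 : (b:ℝ) < 256 * ((d:ℝ) + 1) := by exact_mod_cast h4
  have e1 : (256:ℝ) * (d':ℝ) ≤ P * a := by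
    calc (256:ℝ) * (d':ℝ) = P * ((M:ℝ) * d') := by rw [← mul_assoc, hPM]
    _ ≤ P * a := by nlinarith
  have e2 : P * (a:ℝ) < 256 * ((d':ℝ) + 1) := by
    calc P * (a:ℝ) < P * ((M:ℝ) * ((d':ℝ) + 1)) := by nlinarith
    _ = 256 * ((d':ℝ) + 1) := by rw [← mul_assoc, hPM]
  have habs1 : P * (a:ℝ) - b ≤ |P * (a:ℝ) - b| := le_abs_self _
  have habs2 : -|P * (a:ℝ) - b| ≤ P * (a:ℝ) - b := neg_abs_le _
  have habs0 : 0 ≤ |P * (a:ℝ) - b| := abs_nonneg _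
  push_cast
  rw [abs_le]
  constructor <;> linarith

lemma coordd {M : ℤ} (hM : 0 < M) (a b : ℤ) :
    |((a.fdiv M - b.fdiv M : ℤ) : ℝ)| ≤ |(a:ℝ) - (b:ℝ)| + 1 := by
  obtain ⟨h1, h2⟩ := fdiv_le' hM a
  obtain ⟨h3, h4⟩ := fdiv_le' hM b
  set d' := a.fdiv M
  set d := b.fdiv M
  have hM1 : (1:ℝ) ≤ (M:ℝ) := by exact_mod_cast hM
  have c1 : (M:ℝ) * (d':ℝ) ≤ (a:ℝ) := by exact_mod_cast h1
  have c2 : (a:ℝ) < (M:ℝ) * ((d':ℝ) + 1) := by exact_mod_cast h2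
  have c3 : (M:ℝ) * (d:ℝ) ≤ (b:ℝ) := by exact_mod_cast h3
  have c4 : (b:ℝ) < (M:ℝ) * ((d:ℝ) + 1) := by exact_mod_cast h4
  have habs1 : (a:ℝ) - b ≤ |(a:ℝ) - b| := le_abs_self _
  have habs2 : -|(a:ℝ) - b| ≤ (a:ℝ) - b := neg_abs_le _
  have habs0 : 0 ≤ |(a:ℝ) - b| := abs_nonneg _
  push_cast
  rw [abs_le]
  constructor
  · nlinarith
  · nlinarith


lemma cube_subset_iff (n : ℕ) (j j' : ℤ) (hj : j ≤ j' + 8) (k k' w : IVec n) :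
    (dyadicCube n j' k' ⊆ QW n j k w) ↔
      ∀ i, (k' i).fdiv (2 ^ (j' + 8 - j).toNat) = (k i).fdiv 256 + w i := by
  set m : ℕ := (j' + 8 - j).toNat with hm0
  have hm : (m:ℤ) = j' + 8 - j := Int.toNat_of_nonneg (by omega)
  have hM : (0:ℤ) < 2 ^ m := by positivity
  have hMR : (0:ℝ) < (2:ℝ) ^ m := by positivity
  have hzp : (2:ℝ) ^ (j' : ℤ) = (2:ℝ) ^ (j - 8) * (2:ℝ) ^ m := by
    rw [← zpow_natCast (2:ℝ) m, ← zpow_add₀ (two_ne_zero) (j-8) (m:ℤ)]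
    congr 1; omega
  have h2j' : (0:ℝ) < (2:ℝ) ^ (j':ℤ) := by positivity
  constructor
  · intro hsub i
    set x₀ : Vec n := fun i => (k' i : ℝ) * (2:ℝ) ^ (-j') with hx₀
    have hmem : x₀ ∈ dyadicCube n j' k' := by
      intro i'
      have : (2:ℝ) ^ (j':ℤ) * ((k' i' : ℝ) * (2:ℝ) ^ (-j')) = (k' i' : ℝ) := by
        rw [mul_comm ((k' i':ℝ)) _, ← mul_assoc, ← zpow_add₀ (two_ne_zero : (2:ℝ) ≠ 0)]
        simp
      constructor
      · rw [hx₀]; simp only []; rw [this]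
      · rw [hx₀]; simp only []; rw [this]; linarith
    have h := hsub hmem i
    set a : ℤ := (k i).fdiv 256 + w i with ha
    have hval : (2:ℝ) ^ (j - 8) * x₀ i = (k' i : ℝ) / (2:ℝ) ^ m := by
      rw [hx₀]; simp only []
      have : (2:ℝ) ^ (-j') = ((2:ℝ) ^ (j - 8))⁻¹ * ((2:ℝ) ^ m)⁻¹ := by
        rw [← mul_inv, ← hzp, ← zpow_neg]
      rw [this]
      field_simp
    rw [hval] at h
    obtain ⟨hl, hr⟩ := h
    have hl' : (a:ℝ) * (2:ℝ) ^ m ≤ (k' i : ℝ) := by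
      rw [le_div_iff₀ hMR] at hl; exact hl
    have hr' : (k' i : ℝ) < ((a:ℝ) + 1) * (2:ℝ) ^ m := by
      rw [div_lt_iff₀ hMR] at hr; linarith
    have hlz : a * 2 ^ m ≤ k' i := by exact_mod_cast hl'
    have hrz : k' i < (a + 1) * 2 ^ m := by exact_mod_cast hr'
    exact fdiv_eq_of hM hlz hrz
  · intro h x hx i
    set a : ℤ := (k i).fdiv 256 + w i with ha
    obtain ⟨h1, h2⟩ := fdiv_le' hM (k' i)
    rw [h i] at h1 h2
    have hxi := hx i
    have c1 : ((2:ℤ)^m * a : ℝ) ≤ (k' i : ℝ) := by exact_mod_cast h1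
    have c2 : ((k' i : ℝ)) < ((2:ℤ)^m : ℝ) * ((a:ℝ) + 1) := by exact_mod_cast h2
    have key : (2:ℝ) ^ (j - 8) * x i = ((2:ℝ) ^ (j':ℤ) * x i) / (2:ℝ) ^ m := by
      rw [hzp]; field_simp
    have ca : (a:ℝ) = ((k i).fdiv 256 : ℝ) + (w i : ℝ) := by rw [ha]; push_cast; ring
    constructor
    · rw [key, le_div_iff₀ hMR]
      push_cast at c1 ⊢
      nlinarith [hxi.1, ca]
    · rw [key, div_lt_iff₀ hMR]
      have h2' : k' i + 1 ≤ 2 ^ m * ((k i).fdiv 256 + w i + 1) := Int.add_one_le_iff.mpr h2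
      have c2' : ((k' i : ℝ)) + 1 ≤ 2 ^ m * (((k i).fdiv 256 : ℝ) + (w i : ℝ) + 1) := by
        exact_mod_cast h2'
      push_cast
      nlinarith [hxi.2, c2']


lemma tsum_fiber {α β : Type*} (φ : α → β) (f : α → ℝ≥0∞) :
    ∑' a, f a = ∑' (b : β) (a : {a : α // φ a = b}), f (a : α) := by
  rw [← (Equiv.sigmaFiberEquiv φ).tsum_eq f]
  exact ENNReal.tsum_sigma' _

lemma tsum_holder {ι : Type*} [Countable ι] {p q : ℝ} (hpq : p.HolderConjugate q)
    (f g : ι → ℝ≥0∞) :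
    ∑' i, f i * g i ≤ (∑' i, f i ^ p) ^ (1/p) * (∑' i, g i ^ q) ^ (1/q) := by
  letI : MeasurableSpace ι := ⊤
  haveI : MeasurableSingletonClass ι := ⟨fun _ => MeasurableSpace.measurableSet_top⟩
  have h := ENNReal.lintegral_mul_le_Lp_mul_Lq (Measure.count (α := ι)) hpq
    (f := f) (g := g) measurable_from_top.aemeasurable measurable_from_top.aemeasurable
  simpa [MeasureTheory.lintegral_count] using h

lemma schur {ι κ : Type*} [Countable ι] [Countable κ] {p q : ℝ} (hpq : p.HolderConjugate q)
    (a : ι → ℝ≥0∞) (b : κ → ℝ≥0∞) (K : ι → κ → ℝ≥0∞) (S : ℝ≥0∞)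
    (hrow : ∀ i, ∑' j, K i j ≤ S) (hcol : ∀ j, ∑' i, K i j ≤ S) :
    ∑' (i) (j), a i * b j * K i j ≤
      S * (∑' i, a i ^ p) ^ (1/p) * (∑' j, b j ^ q) ^ (1/q) := by
  have hp0 : (0:ℝ) < p := hpq.pos
  have hq0 : (0:ℝ) < q := hpq.symm.pos
  have hKsplit : ∀ i j, K i j = K i j ^ (1/p) * K i j ^ (1/q) := by
    intro i j
    rw [← ENNReal.rpow_add_of_nonneg _ _ (by positivity) (by positivity),
      show (1:ℝ)/p + 1/q = 1 by
        rw [one_div, one_div]; exact hpq.inv_add_inv_eq_one, ENNReal.rpow_one]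
  calc ∑' (i) (j), a i * b j * K i j
      = ∑' (x : ι × κ), (a x.1 * K x.1 x.2 ^ (1/p)) * (b x.2 * K x.1 x.2 ^ (1/q)) := by
        rw [ENNReal.tsum_prod']
        refine tsum_congr fun i => tsum_congr fun j => ?_
        conv_lhs => rw [hKsplit i j]
        ring
    _ ≤ (∑' (x : ι × κ), (a x.1 * K x.1 x.2 ^ (1/p)) ^ p) ^ (1/p) *
        (∑' (x : ι × κ), (b x.2 * K x.1 x.2 ^ (1/q)) ^ q) ^ (1/q) :=
        tsum_holder hpq _ _
    _ ≤ (S * ∑' i, a i ^ p) ^ (1/p) * (S * ∑' j, b j ^ q) ^ (1/q) := by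
        gcongr
        · calc ∑' (x : ι × κ), (a x.1 * K x.1 x.2 ^ (1/p)) ^ p
              = ∑' (i) (j), a i ^ p * K i j := by
                rw [ENNReal.tsum_prod']
                refine tsum_congr fun i => tsum_congr fun j => ?_
                rw [ENNReal.mul_rpow_of_nonneg _ _ hp0.le, ← ENNReal.rpow_mul,
                  one_div, inv_mul_cancel₀ hp0.ne', ENNReal.rpow_one]
          _ = ∑' i, a i ^ p * ∑' j, K i j := by
                refine tsum_congr fun i => ?_; rw [ENNReal.tsum_mul_left]
          _ ≤ ∑' i, a i ^ p * S := by
                exact ENNReal.tsum_le_tsum fun i => mul_le_mul_right (hrow i) _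
          _ = S * ∑' i, a i ^ p := by rw [ENNReal.tsum_mul_right, mul_comm]
        · calc ∑' (x : ι × κ), (b x.2 * K x.1 x.2 ^ (1/q)) ^ q
              = ∑' (j : κ) (i : ι), b j ^ q * K i j := by
                rw [ENNReal.tsum_prod', ENNReal.tsum_comm]
                refine tsum_congr fun j => tsum_congr fun i => ?_
                rw [ENNReal.mul_rpow_of_nonneg _ _ hq0.le, ← ENNReal.rpow_mul,
                  one_div, inv_mul_cancel₀ hq0.ne', ENNReal.rpow_one]
          _ = ∑' j, b j ^ q * ∑' i, K i j := by
                refine tsum_congr fun j => ?_; rw [ENNReal.tsum_mul_left]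
          _ ≤ ∑' j, b j ^ q * S :=
                ENNReal.tsum_le_tsum fun j => mul_le_mul_right (hcol j) _
          _ = S * ∑' j, b j ^ q := by rw [ENNReal.tsum_mul_right, mul_comm]
    _ = S * (∑' i, a i ^ p) ^ (1/p) * (∑' j, b j ^ q) ^ (1/q) := by
        rw [ENNReal.mul_rpow_of_nonneg _ _ (by positivity),
          ENNReal.mul_rpow_of_nonneg _ _ (by positivity)]
        have : S ^ (1/p) * S ^ (1/q) = S := by
          rw [← ENNReal.rpow_add_of_nonneg _ _ (by positivity) (by positivity),
            show (1:ℝ)/p + 1/q = 1 by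
        rw [one_div, one_div]; exact hpq.inv_add_inv_eq_one, ENNReal.rpow_one]
        calc S ^ (1/p) * (∑' i, a i ^ p) ^ (1/p) * (S ^ (1/q) * (∑' j, b j ^ q) ^ (1/q))
            = (S ^ (1/p) * S ^ (1/q)) * (∑' i, a i ^ p) ^ (1/p) * (∑' j, b j ^ q) ^ (1/q) := by
              ring
          _ = S * (∑' i, a i ^ p) ^ (1/p) * (∑' j, b j ^ q) ^ (1/q) := by rw [this]


lemma summable_int_weight {s : ℝ} (hs : 1 < s) :
    Summable (fun t : ℤ => (1 + |(t:ℝ)|) ^ (-s)) := by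
  have hsum : Summable (fun t : ℤ => 1 / |(t:ℝ) + (1/2 : ℝ)| ^ s) :=
    (Real.summable_one_div_int_add_rpow (1/2) s).mpr hs
  refine Summable.of_nonneg_of_le (fun t => ?_) (fun t => ?_) hsum
  · positivity
  · have h0 : (0:ℝ) < |(t:ℝ) + 1/2| := by
      rw [abs_pos]
      intro h
      have h2 : (2 * t : ℝ) = -1 := by linarith
      have h3 : (2 * t : ℤ) = -1 := by exact_mod_cast h2
      omega
    have hle : |(t:ℝ) + 1/2| ≤ 1 + |(t:ℝ)| := by
      have h12 : |(1/2:ℝ)| = 1/2 := by norm_num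
      calc |(t:ℝ) + 1/2| ≤ |(t:ℝ)| + |(1/2:ℝ)| := abs_add_le _ _
      _ ≤ 1 + |(t:ℝ)| := by rw [h12]; linarith
    have hrle : |(t:ℝ) + 1/2| ^ s ≤ (1 + |(t:ℝ)|) ^ s :=
      Real.rpow_le_rpow (abs_nonneg _) hle (by linarith)
    rw [Real.rpow_neg (by positivity), one_div]
    exact inv_anti₀ (Real.rpow_pos_of_pos h0 s) hrle

lemma tsum_pi_pow (g : ℤ → ℝ≥0∞) :
    ∀ n : ℕ, ∑' z : (Fin n → ℤ), ∏ i, g (z i) = (∑' t : ℤ, g t) ^ n := by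
  intro n
  induction n with
  | zero =>
    rw [pow_zero]
    have h1 : (fun z : Fin 0 → ℤ => ∏ i, g (z i)) = fun _ => 1 := by
      funext z; simp
    rw [h1]
    exact tsum_eq_single (fun i => i.elim0) fun b' hb' => absurd (Subsingleton.elim b' _) hb'
  | succ n ih =>
    let e : (ℤ × (Fin n → ℤ)) ≃ (Fin (n+1) → ℤ) :=
      (Fin.consEquiv (fun _ : Fin (n+1) => ℤ))
    rw [← e.tsum_eq]
    have : ∀ x : ℤ × (Fin n → ℤ),
        (∏ i, g ((e x) i)) = g x.1 * ∏ i, g (x.2 i) := by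
      intro x
      have hx : e x = Fin.cons x.1 x.2 := rfl
      rw [hx, Fin.prod_univ_succ, Fin.cons_zero]
      congr 1
    calc ∑' x : ℤ × (Fin n → ℤ), ∏ i, g ((e x) i)
        = ∑' x : ℤ × (Fin n → ℤ), g x.1 * ∏ i, g (x.2 i) := tsum_congr this
      _ = ∑' (t : ℤ) (z : Fin n → ℤ), g t * ∏ i, g (z i) := ENNReal.tsum_prod'
      _ = (∑' t : ℤ, g t) * ∑' z : (Fin n → ℤ), ∏ i, g (z i) := by
          rw [← ENNReal.tsum_mul_right]
          refine tsum_congr fun t => ?_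
          rw [ENNReal.tsum_mul_left]
      _ = (∑' t : ℤ, g t) ^ (n + 1) := by rw [ih, pow_succ]; ring

lemma lattice_sum_ne_top {n : ℕ} (hn : 1 ≤ n) {s : ℝ} (hs : (n:ℝ) < s) :
    (∑' z : IVec n, ENNReal.ofReal ((1 + enorm2 (fun i => (z i : ℝ))) ^ (-s))) ≠ ⊤ := by
  have hn0 : (0:ℝ) < n := by exact_mod_cast hn
  have hs1 : 1 < s / n := (one_lt_div hn0).mpr hs
  set g : ℤ → ℝ≥0∞ := fun t => ENNReal.ofReal ((1 + |(t:ℝ)|) ^ (-(s/n))) with hg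
  have hterm : ∀ z : IVec n,
      ENNReal.ofReal ((1 + enorm2 (fun i => (z i : ℝ))) ^ (-s)) ≤ ∏ i, g (z i) := by
    intro z
    set E := enorm2 (fun i => (z i : ℝ)) with hE
    have hEn : 0 ≤ E := enorm2_nonneg _
    have hreal : (1 + E) ^ (-s) ≤ ∏ i, (1 + |(z i : ℝ)|) ^ (-(s/n)) := by
      have hprod : ∏ i : Fin n, (1 + |(z i : ℝ)|) ^ (s/n) = (∏ i : Fin n, (1 + |(z i : ℝ)|)) ^ (s/n) :=
        Real.finset_prod_rpow _ _ (fun i _ => by positivity) _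
      have hle1 : (∏ i : Fin n, (1 + |(z i : ℝ)|)) ≤ (1 + E) ^ (n : ℕ) := by
        calc ∏ i : Fin n, (1 + |(z i : ℝ)|) ≤ ∏ _i : Fin n, (1 + E) :=
            Finset.prod_le_prod (fun i _ => by positivity) (fun i _ => by
              have := coord_le_enorm2 (fun i => (z i : ℝ)) i
              rw [← hE] at this
              linarith)
        _ = (1 + E) ^ (n:ℕ) := by rw [Finset.prod_const, Finset.card_univ, Fintype.card_fin]
      have hle2 : (∏ i : Fin n, (1 + |(z i : ℝ)|)) ^ (s/n) ≤ ((1 + E) ^ (n:ℕ)) ^ (s/n) :=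
        Real.rpow_le_rpow (Finset.prod_nonneg fun i _ => by positivity) hle1 (by positivity)
      have hle3 : ((1 + E) ^ (n:ℕ)) ^ (s/n) = (1 + E) ^ s := by
        rw [← Real.rpow_natCast (1 + E) n, ← Real.rpow_mul (by linarith)]
        congr 1
        field_simp
      have hle4 : ∏ i : Fin n, (1 + |(z i : ℝ)|) ^ (s/n) ≤ (1 + E) ^ s := by
        rw [hprod]; rw [hle3] at hle2; exact hle2
      -- now invert
      have hp1 : (0:ℝ) < ∏ i : Fin n, (1 + |(z i : ℝ)|) ^ (s/n) :=
        Finset.prod_pos fun i _ => Real.rpow_pos_of_pos (by positivity) _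
      have hinv : ((1 + E) ^ s)⁻¹ ≤ (∏ i : Fin n, (1 + |(z i : ℝ)|) ^ (s/n))⁻¹ :=
        inv_anti₀ hp1 hle4
      calc (1 + E) ^ (-s) = ((1 + E) ^ s)⁻¹ := by rw [Real.rpow_neg (by linarith)]
      _ ≤ (∏ i : Fin n, (1 + |(z i : ℝ)|) ^ (s/n))⁻¹ := hinv
      _ = ∏ i : Fin n, ((1 + |(z i : ℝ)|) ^ (s/n))⁻¹ := by rw [← Finset.prod_inv_distrib]
      _ = ∏ i : Fin n, (1 + |(z i : ℝ)|) ^ (-(s/n)) := by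
          refine Finset.prod_congr rfl fun i _ => ?_
          rw [Real.rpow_neg (by positivity)]
    calc ENNReal.ofReal ((1 + E) ^ (-s))
        ≤ ENNReal.ofReal (∏ i, (1 + |(z i : ℝ)|) ^ (-(s/n))) := ENNReal.ofReal_le_ofReal hreal
      _ = ∏ i, g (z i) := by
          rw [ENNReal.ofReal_prod_of_nonneg (fun i _ => by positivity)]
  have hgsum : (∑' t : ℤ, g t) ≠ ⊤ := by
    rw [hg]
    have hsummable := summable_int_weight hs1
    rw [← ENNReal.ofReal_tsum_of_nonneg (fun t => by positivity) hsummable]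
    exact ENNReal.ofReal_ne_top
  have hfin : ∑' z : IVec n, ENNReal.ofReal ((1 + enorm2 (fun i => (z i : ℝ))) ^ (-s)) < ⊤ :=
    calc ∑' z : IVec n, ENNReal.ofReal ((1 + enorm2 (fun i => (z i : ℝ))) ^ (-s))
        ≤ ∑' z : IVec n, ∏ i, g (z i) := ENNReal.tsum_le_tsum hterm
      _ = (∑' t : ℤ, g t) ^ n := tsum_pi_pow g n
      _ < ⊤ := ENNReal.pow_lt_top (lt_of_le_of_ne le_top hgsum)
  exact hfin.ne


lemma weight_ineq {N A1 A2 B B' c : ℝ} (hN : 0 < N) (hA1 : 0 ≤ A1) (hA2 : 0 ≤ A2)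
    (hB : 0 ≤ B) (hB' : 0 ≤ B') (hc : 1 ≤ c)
    (h1 : 1 + B ≤ c * (1 + A1)) (h2 : 1 + B' ≤ c * ((1 + B) * (1 + A2))) :
    (1+A1) ^ (-(8*N)) * (1+A2) ^ (-(8*N)) ≤
      c ^ (9*N) * ((1+B) ^ (-N) * ((1+B') ^ (-N) * (1+A2) ^ (-(7*N)))) := by
  have p1 : (0:ℝ) < 1 + A1 := by linarith
  have p2 : (0:ℝ) < 1 + A2 := by linarith
  have pB : (0:ℝ) < 1 + B := by linarith
  have pB' : (0:ℝ) < 1 + B' := by linarith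
  have pc : (0:ℝ) < c := by linarith
  -- key polynomial-side inequality
  have key : (1+B) ^ N * (1+B') ^ N * (1+A2) ^ (7*N) ≤
      c ^ (9*N) * ((1+A1) ^ (8*N) * (1+A2) ^ (8*N)) := by
    have e1 : (1+B) ^ N ≤ c ^ N * (1+A1) ^ N := by
      rw [← Real.mul_rpow pc.le p1.le]
      exact Real.rpow_le_rpow pB.le h1 hN.le
    have e2 : (1+B') ^ N ≤ c ^ (2*N) * ((1+A1) ^ N * (1+A2) ^ N) := by
      have h2' : 1 + B' ≤ c * c * (1 + A1) * (1 + A2) := by nlinarith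
      calc (1+B') ^ N ≤ (c * c * (1 + A1) * (1 + A2)) ^ N :=
            Real.rpow_le_rpow pB'.le h2' hN.le
        _ = c ^ (2*N) * ((1+A1) ^ N * (1+A2) ^ N) := by
            rw [Real.mul_rpow (by positivity) p2.le, Real.mul_rpow (by positivity) p1.le,
              Real.mul_rpow pc.le pc.le, ← Real.rpow_add pc]
            ring_nf
    have e3 : (1+B) ^ N * (1+B') ^ N * (1+A2) ^ (7*N) ≤
        c ^ (3*N) * ((1+A1) ^ (2*N) * (1+A2) ^ (8*N)) := by
      have m1 : (0:ℝ) ≤ (1+B) ^ N := (Real.rpow_pos_of_pos pB N).le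
      have m2 : (0:ℝ) ≤ (1+A2) ^ (7*N) := (Real.rpow_pos_of_pos p2 _).le
      calc (1+B) ^ N * (1+B') ^ N * (1+A2) ^ (7*N)
          ≤ (c ^ N * (1+A1) ^ N) * (c ^ (2*N) * ((1+A1) ^ N * (1+A2) ^ N)) * (1+A2) ^ (7*N) := by
            apply mul_le_mul_of_nonneg_right _ m2
            exact mul_le_mul e1 e2 (Real.rpow_pos_of_pos pB' N).le (by positivity)
        _ = c ^ (3*N) * ((1+A1) ^ (2*N) * (1+A2) ^ (8*N)) := by
            rw [show (3:ℝ)*N = N + 2*N by ring, Real.rpow_add pc,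
              show (2:ℝ)*N = N + N by ring, Real.rpow_add p1,
              show (8:ℝ)*N = N + 7*N by ring, Real.rpow_add p2]
            ring
    refine e3.trans ?_
    have f1 : c ^ (3*N) ≤ c ^ (9*N) := Real.rpow_le_rpow_of_exponent_le hc (by nlinarith)
    have f2 : (1+A1) ^ (2*N) ≤ (1+A1) ^ (8*N) :=
      Real.rpow_le_rpow_of_exponent_le (by linarith) (by nlinarith)
    have g1 : (0:ℝ) ≤ (1+A1) ^ (2*N) := (Real.rpow_pos_of_pos p1 _).le
    have g2 : (0:ℝ) ≤ (1+A2) ^ (8*N) := (Real.rpow_pos_of_pos p2 _).le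
    have g3 : (0:ℝ) ≤ c ^ (9*N) := (Real.rpow_pos_of_pos pc _).le
    calc c ^ (3*N) * ((1+A1) ^ (2*N) * (1+A2) ^ (8*N))
        ≤ c ^ (9*N) * ((1+A1) ^ (2*N) * (1+A2) ^ (8*N)) := by
          apply mul_le_mul_of_nonneg_right f1 (by positivity)
      _ ≤ c ^ (9*N) * ((1+A1) ^ (8*N) * (1+A2) ^ (8*N)) := by
          apply mul_le_mul_of_nonneg_left _ g3
          exact mul_le_mul_of_nonneg_right f2 g2
  -- convert to negative exponents
  have q1 : (0:ℝ) < (1+A1) ^ (8*N) * (1+A2) ^ (8*N) := by positivity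
  have q2 : (0:ℝ) < (1+B) ^ N * (1+B') ^ N * (1+A2) ^ (7*N) := by positivity
  have q3 : (0:ℝ) < c ^ (9*N) := by positivity
  have hinv : ((1+A1) ^ (8*N) * (1+A2) ^ (8*N))⁻¹ ≤
      c ^ (9*N) * ((1+B) ^ N * (1+B') ^ N * (1+A2) ^ (7*N))⁻¹ := by
    rw [← div_eq_mul_inv, le_div_iff₀ q2, inv_mul_le_iff₀ q1]
    calc (1+B) ^ N * (1+B') ^ N * (1+A2) ^ (7*N)
        ≤ c ^ (9*N) * ((1+A1) ^ (8*N) * (1+A2) ^ (8*N)) := key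
      _ = (1+A1) ^ (8*N) * (1+A2) ^ (8*N) * c ^ (9*N) := by ring
  calc (1+A1) ^ (-(8*N)) * (1+A2) ^ (-(8*N))
      = ((1+A1) ^ (8*N) * (1+A2) ^ (8*N))⁻¹ := by
        rw [Real.rpow_neg p1.le, Real.rpow_neg p2.le, mul_inv]
    _ ≤ c ^ (9*N) * ((1+B) ^ N * (1+B') ^ N * (1+A2) ^ (7*N))⁻¹ := hinv
    _ = c ^ (9*N) * ((1+B) ^ (-N) * ((1+B') ^ (-N) * (1+A2) ^ (-(7*N)))) := by
        rw [Real.rpow_neg pB.le, Real.rpow_neg pB'.le, Real.rpow_neg p2.le, mul_inv, mul_inv]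
        ring

end Stmt8

/-- the Cauchy–Schwarz-type estimate of Lemma `inequality3`
(`1 < p ≤ 2`, `p' = p/(p−1)`, `N > n`), with both sides valued in `[0,∞]`. -/
theorem statement8 (n : ℕ) (hn : 1 ≤ n) (p N : ℝ) (hp1 : 1 < p) (hp2 : p ≤ 2)
    (hN : (n : ℝ) < N) :
    ∃ C : ℝ, 0 < C ∧ ∀ (j j' : ℤ), j ≤ j' + 8 → ∀ (k : IVec n)
      (u v : En n → IVec n → ℝ≥0),
      (∑' (ε' : En n) (k' : IVec n) (ε'' : En n) (k'' : IVec n),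
          (u ε' k' : ℝ≥0∞) * (v ε'' k'' : ℝ≥0∞) ^ (p - 1) *
            ENNReal.ofReal
              ((1 + enorm2 (fun i => (2:ℝ) ^ (j - j') * (k' i : ℝ) - (k i : ℝ))) ^ (-(8*N))) *
            ENNReal.ofReal
              ((1 + enorm2 (fun i => (k' i : ℝ) - (k'' i : ℝ))) ^ (-(8*N)))) ≤
      ENNReal.ofReal C *
        ∑' (w : IVec n) (w' : IVec n),
          ENNReal.ofReal ((1 + enorm2 (fun i => (w i : ℝ))) ^ (-N)) *
          ENNReal.ofReal ((1 + enorm2 (fun i => (w' i : ℝ))) ^ (-N)) *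
          (∑' (ε' : En n) (k' : {k' : IVec n // dyadicCube n j' k' ⊆ QW n j k w}),
              (u ε' (k' : IVec n) : ℝ≥0∞) ^ (p : ℝ)) ^ (1 / p) *
          (∑' (ε'' : En n) (k'' : {k'' : IVec n // dyadicCube n j' k'' ⊆ QW n j k w'}),
              (v ε'' (k'' : IVec n) : ℝ≥0∞) ^ (p : ℝ)) ^ (1 / (p / (p - 1))) := by
  classical
  have hn0 : (0:ℝ) < n := by exact_mod_cast hn
  have hN0 : (0:ℝ) < N := lt_trans hn0 hN
  have hsqn : (0:ℝ) ≤ Real.sqrt n := Real.sqrt_nonneg _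
  set c : ℝ := 1 + Real.sqrt n with hcdef
  have hc1 : (1:ℝ) ≤ c := by rw [hcdef]; linarith
  have hcpos : (0:ℝ) < c := by linarith
  set S0 : ℝ≥0∞ :=
    ∑' z : IVec n, ENNReal.ofReal ((1 + enorm2 (fun i => (z i : ℝ))) ^ (-(7*N))) with hS0def
  have hS0top : S0 ≠ ⊤ := Stmt8.lattice_sum_ne_top hn (by nlinarith)
  set S : ℝ≥0∞ := (Fintype.card (En n) : ℝ≥0∞) * S0 with hSdef
  have hStop : S ≠ ⊤ := ENNReal.mul_ne_top (by simp) hS0top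
  set C : ℝ := c ^ (9*N) * (S.toReal + 1) with hCdef
  have hCpos : 0 < C := by
    have h1 : (0:ℝ) < c ^ (9*N) := Real.rpow_pos_of_pos hcpos _
    have h2 : (0:ℝ) ≤ S.toReal := ENNReal.toReal_nonneg
    nlinarith
  refine ⟨C, hCpos, ?_⟩
  intro j j' hj k u v
  -- conjugate exponents
  set q : ℝ := p / (p - 1) with hqdef
  have hpq : p.HolderConjugate q := (Real.holderConjugate_iff_eq_conjExponent hp1).mpr rfl
  have hp0 : (0:ℝ) < p := by linarith
  have hq0 : (0:ℝ) < q := hpq.symm.pos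
  have hpne : p - 1 ≠ 0 := by linarith
  have hpm1q : (p - 1) * q = p := by
    rw [hqdef]
    field_simp
  -- blocking data
  set m : ℕ := (j' + 8 - j).toNat with hmdef
  have hm : (m:ℤ) = j' + 8 - j := Int.toNat_of_nonneg (by omega)
  set M : ℤ := 2 ^ m with hMdef
  have hM : (0:ℤ) < M := by positivity
  set φ : IVec n → IVec n := fun k' i => (k' i).fdiv M - (k i).fdiv 256 with hφdef
  have hfib : ∀ (k' w : IVec n), (dyadicCube n j' k' ⊆ QW n j k w) ↔ φ k' = w := by
    intro k' w
    rw [Stmt8.cube_subset_iff n j j' hj k k' w]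
    rw [← hmdef, ← hMdef]
    constructor
    · intro h; funext i; have hi := h i
      simp only [hφdef]
      omega
    · intro h i
      have hi := congrFun h i
      simp only [hφdef] at hi
      omega
  set P : ℝ := (2:ℝ) ^ (j - j') with hPdef
  have hPpos : (0:ℝ) < P := by rw [hPdef]; positivity
  have hPM : P * ((M:ℤ):ℝ) = 256 := by
    rw [hMdef, hPdef]
    push_cast
    rw [← zpow_natCast (2:ℝ) m, ← zpow_add₀ (two_ne_zero : (2:ℝ) ≠ 0)]
    have : j - j' + (m:ℤ) = 8 := by omega
    rw [this]
    norm_num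
  -- geometry
  have geo1 : ∀ k' : IVec n, 1 + enorm2 (fun i => ((φ k') i : ℝ)) ≤
      c * (1 + enorm2 (fun i => P * (k' i : ℝ) - (k i : ℝ))) := by
    intro k'
    have hcoord : ∀ i, |(fun i => ((φ k') i : ℝ)) i| ≤
        |(fun i => P * (k' i : ℝ) - (k i : ℝ)) i| + 1 := by
      intro i
      have h := Stmt8.coordw hM hPpos hPM (k' i) (k i)
      simpa [hφdef] using h
    have h2 := Stmt8.enorm2_le_add_sqrt hcoord
    have h3 := Stmt8.enorm2_nonneg (fun i => P * (k' i : ℝ) - (k i : ℝ))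
    rw [hcdef]
    nlinarith
  have geo2 : ∀ k' k'' : IVec n,
      1 + enorm2 (fun i => ((φ k'') i : ℝ)) ≤
      c * ((1 + enorm2 (fun i => ((φ k') i : ℝ))) *
        (1 + enorm2 (fun i => (k' i : ℝ) - (k'' i : ℝ)))) := by
    intro k' k''
    have hdiff : ∀ i, |(fun i => ((φ k'') i : ℝ) - ((φ k') i : ℝ)) i| ≤
        |(fun i => (k' i : ℝ) - (k'' i : ℝ)) i| + 1 := by
      intro i
      have hcast : ((φ k'') i : ℝ) - ((φ k') i : ℝ) =
          (((k'' i).fdiv M - (k' i).fdiv M : ℤ) : ℝ) := by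
        simp only [hφdef]; push_cast; ring
      simp only []
      rw [hcast, abs_sub_comm ((k' i : ℝ)) ((k'' i : ℝ))]
      exact Stmt8.coordd hM (k'' i) (k' i)
    have tri : enorm2 (fun i => ((φ k'') i : ℝ)) ≤
        enorm2 (fun i => ((φ k') i : ℝ)) +
          (enorm2 (fun i => (k' i : ℝ) - (k'' i : ℝ)) + Real.sqrt n) := by
      have hsplit : (fun i => ((φ k'') i : ℝ)) =
          (fun i => ((φ k') i : ℝ)) + fun i => ((φ k'') i : ℝ) - ((φ k') i : ℝ) := by
        funext i; simp
      calc enorm2 (fun i => ((φ k'') i : ℝ))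
          = enorm2 ((fun i => ((φ k') i : ℝ)) +
              fun i => ((φ k'') i : ℝ) - ((φ k') i : ℝ)) := by rw [← hsplit]
        _ ≤ enorm2 (fun i => ((φ k') i : ℝ)) +
              enorm2 (fun i => ((φ k'') i : ℝ) - ((φ k') i : ℝ)) := Stmt8.enorm2_add_le _ _
        _ ≤ enorm2 (fun i => ((φ k') i : ℝ)) +
              (enorm2 (fun i => (k' i : ℝ) - (k'' i : ℝ)) + Real.sqrt n) := by
            have := Stmt8.enorm2_le_add_sqrt hdiff
            linarith
    have h3 := Stmt8.enorm2_nonneg (fun i => ((φ k') i : ℝ))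
    have h4 := Stmt8.enorm2_nonneg (fun i => (k' i : ℝ) - (k'' i : ℝ))
    have h5 := Stmt8.enorm2_nonneg (fun i => ((φ k'') i : ℝ))
    rw [hcdef]
    nlinarith [mul_nonneg h3 h4, mul_nonneg hsqn h3, mul_nonneg hsqn h4,
      mul_nonneg (mul_nonneg hsqn h3) h4]
  -- weights and kernel in ℝ≥0∞
  set W : IVec n → ℝ≥0∞ :=
    fun w => ENNReal.ofReal ((1 + enorm2 (fun i => (w i : ℝ))) ^ (-N)) with hWdef
  set Kk : IVec n → IVec n → ℝ≥0∞ := fun a b =>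
    ENNReal.ofReal ((1 + enorm2 (fun i => (a i : ℝ) - (b i : ℝ))) ^ (-(7*N))) with hKkdef
  set c0 : ℝ≥0∞ := ENNReal.ofReal (c ^ (9*N)) with hc0def
  -- termwise bound
  have hterm : ∀ (ε' : En n) (k' : IVec n) (ε'' : En n) (k'' : IVec n),
      (u ε' k' : ℝ≥0∞) * (v ε'' k'' : ℝ≥0∞) ^ (p - 1) *
        ENNReal.ofReal ((1 + enorm2 (fun i => P * (k' i : ℝ) - (k i : ℝ))) ^ (-(8*N))) *
        ENNReal.ofReal ((1 + enorm2 (fun i => (k' i : ℝ) - (k'' i : ℝ))) ^ (-(8*N))) ≤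
      c0 * ((W (φ k') * W (φ k'')) *
        ((u ε' k' : ℝ≥0∞) * (v ε'' k'' : ℝ≥0∞) ^ (p - 1) * Kk k' k'')) := by
    intro ε' k' ε'' k''
    have hA1 := Stmt8.enorm2_nonneg (fun i => P * (k' i : ℝ) - (k i : ℝ))
    have hA2 := Stmt8.enorm2_nonneg (fun i => (k' i : ℝ) - (k'' i : ℝ))
    have hB := Stmt8.enorm2_nonneg (fun i => ((φ k') i : ℝ))
    have hB' := Stmt8.enorm2_nonneg (fun i => ((φ k'') i : ℝ))
    have hreal := Stmt8.weight_ineq hN0 hA1 hA2 hB hB' hc1 (geo1 k') (geo2 k' k'')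
    have hofreal :
        ENNReal.ofReal ((1 + enorm2 (fun i => P * (k' i : ℝ) - (k i : ℝ))) ^ (-(8*N))) *
        ENNReal.ofReal ((1 + enorm2 (fun i => (k' i : ℝ) - (k'' i : ℝ))) ^ (-(8*N))) ≤
        c0 * (W (φ k') * W (φ k'')) * Kk k' k'' := by
      rw [← ENNReal.ofReal_mul (by positivity)]
      calc ENNReal.ofReal
            ((1 + enorm2 (fun i => P * (k' i : ℝ) - (k i : ℝ))) ^ (-(8*N)) *
              (1 + enorm2 (fun i => (k' i : ℝ) - (k'' i : ℝ))) ^ (-(8*N)))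
          ≤ ENNReal.ofReal (c ^ (9*N) *
              ((1 + enorm2 (fun i => ((φ k') i : ℝ))) ^ (-N) *
               ((1 + enorm2 (fun i => ((φ k'') i : ℝ))) ^ (-N) *
                (1 + enorm2 (fun i => (k' i : ℝ) - (k'' i : ℝ))) ^ (-(7*N))))) :=
            ENNReal.ofReal_le_ofReal hreal
        _ = c0 * (W (φ k') * W (φ k'')) * Kk k' k'' := by
            rw [hc0def, hWdef, hKkdef]
            rw [ENNReal.ofReal_mul (by positivity), ENNReal.ofReal_mul (by positivity),
              ENNReal.ofReal_mul (by positivity)]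
            ring
    calc (u ε' k' : ℝ≥0∞) * (v ε'' k'' : ℝ≥0∞) ^ (p - 1) *
          ENNReal.ofReal ((1 + enorm2 (fun i => P * (k' i : ℝ) - (k i : ℝ))) ^ (-(8*N))) *
          ENNReal.ofReal ((1 + enorm2 (fun i => (k' i : ℝ) - (k'' i : ℝ))) ^ (-(8*N)))
        = ((u ε' k' : ℝ≥0∞) * (v ε'' k'' : ℝ≥0∞) ^ (p - 1)) *
          (ENNReal.ofReal ((1 + enorm2 (fun i => P * (k' i : ℝ) - (k i : ℝ))) ^ (-(8*N))) *
           ENNReal.ofReal ((1 + enorm2 (fun i => (k' i : ℝ) - (k'' i : ℝ))) ^ (-(8*N)))) := by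
          ring
      _ ≤ ((u ε' k' : ℝ≥0∞) * (v ε'' k'' : ℝ≥0∞) ^ (p - 1)) *
          (c0 * (W (φ k') * W (φ k'')) * Kk k' k'') := mul_le_mul_right hofreal _
      _ = c0 * ((W (φ k') * W (φ k'')) *
          ((u ε' k' : ℝ≥0∞) * (v ε'' k'' : ℝ≥0∞) ^ (p - 1) * Kk k' k'')) := by ring
  -- abbreviations
  set A := En n × IVec n with hAdef
  set G : A → A → ℝ≥0∞ := fun x y =>
    (u x.1 x.2 : ℝ≥0∞) * (v y.1 y.2 : ℝ≥0∞) ^ (p - 1) * Kk x.2 y.2 with hGdef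
  -- step 1 : termwise bound
  have step1 : (∑' (ε' : En n) (k' : IVec n) (ε'' : En n) (k'' : IVec n),
      (u ε' k' : ℝ≥0∞) * (v ε'' k'' : ℝ≥0∞) ^ (p - 1) *
        ENNReal.ofReal ((1 + enorm2 (fun i => P * (k' i : ℝ) - (k i : ℝ))) ^ (-(8*N))) *
        ENNReal.ofReal ((1 + enorm2 (fun i => (k' i : ℝ) - (k'' i : ℝ))) ^ (-(8*N)))) ≤
      c0 * ∑' (ε' : En n) (k' : IVec n) (ε'' : En n) (k'' : IVec n),
        (W (φ k') * W (φ k'')) * G (ε', k') (ε'', k'') := by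
    calc (∑' (ε' : En n) (k' : IVec n) (ε'' : En n) (k'' : IVec n),
        (u ε' k' : ℝ≥0∞) * (v ε'' k'' : ℝ≥0∞) ^ (p - 1) *
          ENNReal.ofReal ((1 + enorm2 (fun i => P * (k' i : ℝ) - (k i : ℝ))) ^ (-(8*N))) *
          ENNReal.ofReal ((1 + enorm2 (fun i => (k' i : ℝ) - (k'' i : ℝ))) ^ (-(8*N))))
        ≤ ∑' (ε' : En n) (k' : IVec n) (ε'' : En n) (k'' : IVec n),
            c0 * ((W (φ k') * W (φ k'')) * G (ε', k') (ε'', k'')) := by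
          refine ENNReal.tsum_le_tsum fun ε' => ENNReal.tsum_le_tsum fun k' =>
            ENNReal.tsum_le_tsum fun ε'' => ENNReal.tsum_le_tsum fun k'' => ?_
          exact hterm ε' k' ε'' k''
      _ = c0 * ∑' (ε' : En n) (k' : IVec n) (ε'' : En n) (k'' : IVec n),
            (W (φ k') * W (φ k'')) * G (ε', k') (ε'', k'') := by
          simp_rw [ENNReal.tsum_mul_left]
  -- step 2 : fiber decomposition
  have step2 : (∑' (ε' : En n) (k' : IVec n) (ε'' : En n) (k'' : IVec n),
      (W (φ k') * W (φ k'')) * G (ε', k') (ε'', k'')) =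
      ∑' (w' : IVec n) (w : IVec n), (W w * W w') *
        ∑' (x : {x : A // φ x.2 = w}) (y : {y : A // φ y.2 = w'}), G x.val y.val := by
    have h4to2 : (∑' (x : A) (y : A), (W (φ x.2) * W (φ y.2)) * G x y) =
        ∑' (ε' : En n) (k' : IVec n) (ε'' : En n) (k'' : IVec n),
          (W (φ k') * W (φ k'')) * G (ε', k') (ε'', k'') := by
      rw [ENNReal.tsum_prod']
      exact tsum_congr fun ε' => tsum_congr fun k' => ENNReal.tsum_prod'
    rw [← h4to2]
    have hdecY : ∀ x : A, (∑' (y : A), (W (φ x.2) * W (φ y.2)) * G x y)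
        = ∑' (w' : IVec n) (y : {y : A // φ y.2 = w'}), (W (φ x.2) * W w') * G x y.val := by
      intro x
      rw [Stmt8.tsum_fiber (fun y : A => φ y.2)
        (fun y => (W (φ x.2) * W (φ y.2)) * G x y)]
      exact tsum_congr fun w' => tsum_congr fun y => by rw [y.2]
    calc (∑' (x : A) (y : A), (W (φ x.2) * W (φ y.2)) * G x y)
        = ∑' (x : A) (w' : IVec n) (y : {y : A // φ y.2 = w'}),
            (W (φ x.2) * W w') * G x y.val := tsum_congr hdecY
      _ = ∑' (w' : IVec n) (x : A) (y : {y : A // φ y.2 = w'}),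
            (W (φ x.2) * W w') * G x y.val := ENNReal.tsum_comm
      _ = ∑' (w' : IVec n) (w : IVec n) (x : {x : A // φ x.2 = w})
            (y : {y : A // φ y.2 = w'}), (W w * W w') * G x.val y.val := by
          refine tsum_congr fun w' => ?_
          rw [Stmt8.tsum_fiber (fun x : A => φ x.2)
            (fun x => ∑' (y : {y : A // φ y.2 = w'}), (W (φ x.2) * W w') * G x y.val)]
          exact tsum_congr fun w => tsum_congr fun x =>
            tsum_congr fun y => by rw [x.2]
      _ = ∑' (w' : IVec n) (w : IVec n), (W w * W w') *
            ∑' (x : {x : A // φ x.2 = w}) (y : {y : A // φ y.2 = w'}), G x.val y.val := by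
          refine tsum_congr fun w' => tsum_congr fun w => ?_
          simp_rw [ENNReal.tsum_mul_left]
  -- kernel row/column bounds
  have hker : ∀ a b : IVec n, Kk a b =
      ENNReal.ofReal ((1 + enorm2 (fun i => ((a i : ℤ) : ℝ) - ((b i : ℤ) : ℝ))) ^ (-(7*N))) :=
    fun a b => rfl
  have htrans1 : ∀ a : IVec n, (∑' (z : IVec n), Kk a z) = S0 := by
    intro a
    calc (∑' (z : IVec n), Kk a z)
        = ∑' (z : IVec n),
            ENNReal.ofReal ((1 + enorm2 (fun i => (((Equiv.subLeft a) z) i : ℝ))) ^ (-(7*N))) := by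
          refine tsum_congr fun z => ?_
          simp only [hKkdef]
          have : (fun i => (a i : ℝ) - (z i : ℝ)) =
              fun i => (((Equiv.subLeft a) z) i : ℝ) := by
            funext i
            simp [Equiv.subLeft]
          rw [this]
      _ = S0 := by
          rw [hS0def]
          exact (Equiv.subLeft a).tsum_eq
            (fun z => ENNReal.ofReal ((1 + enorm2 (fun i => (z i : ℝ))) ^ (-(7*N))))
  have htrans2 : ∀ b : IVec n, (∑' (z : IVec n), Kk z b) = S0 := by
    intro b
    calc (∑' (z : IVec n), Kk z b)
        = ∑' (z : IVec n),
            ENNReal.ofReal ((1 + enorm2 (fun i => (((Equiv.subRight b) z) i : ℝ))) ^ (-(7*N))) := by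
          refine tsum_congr fun z => ?_
          simp only [hKkdef]
          have : (fun i => (z i : ℝ) - (b i : ℝ)) =
              fun i => (((Equiv.subRight b) z) i : ℝ) := by
            funext i
            simp [Equiv.subRight]
          rw [this]
      _ = S0 := by
          rw [hS0def]
          exact (Equiv.subRight b).tsum_eq
            (fun z => ENNReal.ofReal ((1 + enorm2 (fun i => (z i : ℝ))) ^ (-(7*N))))
  have hrowgen : ∀ (a : IVec n) (Q : A → Prop),
      (∑' (y : {y : A // Q y}), Kk a y.val.2) ≤ S := by
    intro a Q
    calc (∑' (y : {y : A // Q y}), Kk a y.val.2)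
        ≤ ∑' (y : A), Kk a y.2 :=
          ENNReal.tsum_comp_le_tsum_of_injective Subtype.val_injective
            (fun y : A => Kk a y.2)
      _ = ∑' (ε : En n) (z : IVec n), Kk a z := ENNReal.tsum_prod'
      _ = (Fintype.card (En n) : ℝ≥0∞) * ∑' (z : IVec n), Kk a z := by
          rw [tsum_fintype, Finset.sum_const, Finset.card_univ, nsmul_eq_mul]
      _ = S := by rw [htrans1 a, hSdef]
  have hcolgen : ∀ (b : IVec n) (Q : A → Prop),
      (∑' (x : {x : A // Q x}), Kk x.val.2 b) ≤ S := by
    intro b Q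
    calc (∑' (x : {x : A // Q x}), Kk x.val.2 b)
        ≤ ∑' (x : A), Kk x.2 b :=
          ENNReal.tsum_comp_le_tsum_of_injective Subtype.val_injective
            (fun x : A => Kk x.2 b)
      _ = ∑' (ε : En n) (z : IVec n), Kk z b := ENNReal.tsum_prod'
      _ = (Fintype.card (En n) : ℝ≥0∞) * ∑' (z : IVec n), Kk z b := by
          rw [tsum_fintype, Finset.sum_const, Finset.card_univ, nsmul_eq_mul]
      _ = S := by rw [htrans2 b, hSdef]
  -- Schur bound for each pair of fibers
  have hD : ∀ w w' : IVec n,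
      (∑' (x : {x : A // φ x.2 = w}) (y : {y : A // φ y.2 = w'}), G x.val y.val) ≤
      S * (∑' (x : {x : A // φ x.2 = w}), (u x.val.1 x.val.2 : ℝ≥0∞) ^ p) ^ (1/p) *
        (∑' (y : {y : A // φ y.2 = w'}),
          ((v y.val.1 y.val.2 : ℝ≥0∞) ^ (p - 1)) ^ q) ^ (1/q) := by
    intro w w'
    exact Stmt8.schur hpq
      (fun x : {x : A // φ x.2 = w} => (u x.val.1 x.val.2 : ℝ≥0∞))
      (fun y : {y : A // φ y.2 = w'} => (v y.val.1 y.val.2 : ℝ≥0∞) ^ (p - 1))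
      (fun x y => Kk x.val.2 y.val.2) S
      (fun x => hrowgen x.val.2 _) (fun y => hcolgen y.val.2 _)
  -- identification of the fiber sums with the cube sums
  have hXeq : ∀ w : IVec n,
      (∑' (x : {x : A // φ x.2 = w}), (u x.val.1 x.val.2 : ℝ≥0∞) ^ p) =
      ∑' (ε' : En n) (k' : {k' : IVec n // dyadicCube n j' k' ⊆ QW n j k w}),
        (u ε' (k' : IVec n) : ℝ≥0∞) ^ (p : ℝ) := by
    intro w
    let e : (En n × {k' : IVec n // dyadicCube n j' k' ⊆ QW n j k w}) ≃
        {x : A // φ x.2 = w} :=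
      { toFun := fun z => ⟨(z.1, z.2.val), (hfib _ _).mp z.2.2⟩
        invFun := fun x => (x.val.1, ⟨x.val.2, (hfib _ _).mpr x.2⟩)
        left_inv := fun z => rfl
        right_inv := fun x => rfl }
    rw [← e.tsum_eq (fun x : {x : A // φ x.2 = w} => (u x.val.1 x.val.2 : ℝ≥0∞) ^ p)]
    rw [ENNReal.tsum_prod']
    exact tsum_congr fun ε' => tsum_congr fun k' => rfl
  have hYeq : ∀ w' : IVec n,
      (∑' (y : {y : A // φ y.2 = w'}), ((v y.val.1 y.val.2 : ℝ≥0∞) ^ (p - 1)) ^ q) =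
      ∑' (ε'' : En n) (k'' : {k'' : IVec n // dyadicCube n j' k'' ⊆ QW n j k w'}),
        (v ε'' (k'' : IVec n) : ℝ≥0∞) ^ (p : ℝ) := by
    intro w'
    have hpow : ∀ x : ℝ≥0∞, (x ^ (p - 1)) ^ q = x ^ p := by
      intro x
      rw [← ENNReal.rpow_mul, hpm1q]
    let e : (En n × {k'' : IVec n // dyadicCube n j' k'' ⊆ QW n j k w'}) ≃
        {y : A // φ y.2 = w'} :=
      { toFun := fun z => ⟨(z.1, z.2.val), (hfib _ _).mp z.2.2⟩
        invFun := fun y => (y.val.1, ⟨y.val.2, (hfib _ _).mpr y.2⟩)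
        left_inv := fun z => rfl
        right_inv := fun y => rfl }
    calc (∑' (y : {y : A // φ y.2 = w'}), ((v y.val.1 y.val.2 : ℝ≥0∞) ^ (p - 1)) ^ q)
        = ∑' (y : {y : A // φ y.2 = w'}), (v y.val.1 y.val.2 : ℝ≥0∞) ^ p :=
          tsum_congr fun y => hpow _
      _ = ∑' (ε'' : En n) (k'' : {k'' : IVec n // dyadicCube n j' k'' ⊆ QW n j k w'}),
            (v ε'' (k'' : IVec n) : ℝ≥0∞) ^ (p : ℝ) := by
          rw [← e.tsum_eq (fun y : {y : A // φ y.2 = w'} => (v y.val.1 y.val.2 : ℝ≥0∞) ^ p)]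
          rw [ENNReal.tsum_prod']
          exact tsum_congr fun ε'' => tsum_congr fun k'' => rfl
  -- final constant comparison
  have hc0S : c0 * S ≤ ENNReal.ofReal C := by
    have hS' : S ≤ ENNReal.ofReal (S.toReal + 1) := by
      conv_lhs => rw [← ENNReal.ofReal_toReal hStop]
      exact ENNReal.ofReal_le_ofReal (by linarith)
    calc c0 * S ≤ c0 * ENNReal.ofReal (S.toReal + 1) := mul_le_mul_right hS' _
      _ = ENNReal.ofReal C := by
        rw [hc0def, ← ENNReal.ofReal_mul (by positivity), hCdef]
  -- assemble
  set X : IVec n → ℝ≥0∞ := fun w =>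
    ∑' (ε' : En n) (k' : {k' : IVec n // dyadicCube n j' k' ⊆ QW n j k w}),
      (u ε' (k' : IVec n) : ℝ≥0∞) ^ (p : ℝ) with hXdef
  set Y : IVec n → ℝ≥0∞ := fun w' =>
    ∑' (ε'' : En n) (k'' : {k'' : IVec n // dyadicCube n j' k'' ⊆ QW n j k w'}),
      (v ε'' (k'' : IVec n) : ℝ≥0∞) ^ (p : ℝ) with hYdef
  calc (∑' (ε' : En n) (k' : IVec n) (ε'' : En n) (k'' : IVec n),
      (u ε' k' : ℝ≥0∞) * (v ε'' k'' : ℝ≥0∞) ^ (p - 1) *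
        ENNReal.ofReal ((1 + enorm2 (fun i => P * (k' i : ℝ) - (k i : ℝ))) ^ (-(8*N))) *
        ENNReal.ofReal ((1 + enorm2 (fun i => (k' i : ℝ) - (k'' i : ℝ))) ^ (-(8*N))))
      ≤ c0 * ∑' (ε' : En n) (k' : IVec n) (ε'' : En n) (k'' : IVec n),
          (W (φ k') * W (φ k'')) * G (ε', k') (ε'', k'') := step1
    _ = c0 * ∑' (w' : IVec n) (w : IVec n), (W w * W w') *
          ∑' (x : {x : A // φ x.2 = w}) (y : {y : A // φ y.2 = w'}), G x.val y.val := by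
        rw [step2]
    _ ≤ c0 * ∑' (w' : IVec n) (w : IVec n), (W w * W w') *
          (S * X w ^ (1/p) * Y w' ^ (1/q)) := by
        refine mul_le_mul_right (ENNReal.tsum_le_tsum fun w' =>
          ENNReal.tsum_le_tsum fun w => mul_le_mul_right ?_ _) _
        calc (∑' (x : {x : A // φ x.2 = w}) (y : {y : A // φ y.2 = w'}), G x.val y.val)
            ≤ S * (∑' (x : {x : A // φ x.2 = w}), (u x.val.1 x.val.2 : ℝ≥0∞) ^ p) ^ (1/p) *
                (∑' (y : {y : A // φ y.2 = w'}),
                  ((v y.val.1 y.val.2 : ℝ≥0∞) ^ (p - 1)) ^ q) ^ (1/q) := hD w w'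
          _ = S * X w ^ (1/p) * Y w' ^ (1/q) := by rw [hXeq w, hYeq w', hXdef, hYdef]
    _ = (c0 * S) * ∑' (w' : IVec n) (w : IVec n),
          (W w * W w') * (X w ^ (1/p) * Y w' ^ (1/q)) := by
        have hpt : ∀ w' w : IVec n, (W w * W w') * (S * X w ^ (1/p) * Y w' ^ (1/q)) =
            S * ((W w * W w') * (X w ^ (1/p) * Y w' ^ (1/q))) := by
          intro w' w; ring
        simp_rw [hpt, ENNReal.tsum_mul_left]
        rw [hSdef]
        ring
    _ = (c0 * S) * ∑' (w : IVec n) (w' : IVec n),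
          (W w * W w') * (X w ^ (1/p) * Y w' ^ (1/q)) := by
        rw [ENNReal.tsum_comm (f := fun w' w =>
          (W w * W w') * (X w ^ (1/p) * Y w' ^ (1/q)))]
    _ ≤ ENNReal.ofReal C * ∑' (w : IVec n) (w' : IVec n),
          (W w * W w') * (X w ^ (1/p) * Y w' ^ (1/q)) := mul_le_mul_left hc0S _
    _ = ENNReal.ofReal C * ∑' (w : IVec n) (w' : IVec n),
          W w * W w' * X w ^ (1/p) * Y w' ^ (1/(p/(p-1))) := by
        rw [hqdef]
        congr 1
        exact tsum_congr fun w => tsum_congr fun w' => by ring
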